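/- The second complex partial derivatives of Φ at the point (1/2, 1/4) are ∂²Φ/∂z₁² = 2πi·(2i−1)/2 = −2π − πi, ∂²Φ/∂z₂² = 2πi·(2i) = −4π, and ∂²Φ/∂z₁∂z₂ = 2πi·i = −2π; consequently the determinant of the complex Hessian of Φ at (1/2, 1/4) equals 4π²(1+i), which is nonzero, so (1/2,1/4) is a non-degenerate critical point of Φ. -/

import Mathlib

open Real

/-- The dilogarithm `Li₂(z) = -∫₀¹ log(1 - t z)/t dt` (principal branch of `log`). -/
noncomputable def Li2 (z : ℂ) : ℂ :=
  -∫ t in (0:ℝ)..1, Complex.log (1 - (t:ℂ) * z) / (t:ℂ)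

/-- The potential function of the Whitehead link (at `s₁ = s₂ = 1`). -/
noncomputable def Phi0 (z₁ z₂ : ℂ) : ℂ :=
  (1 / (2 * (π:ℂ) * Complex.I)) *
    (Li2 (Complex.exp (-(2 * (π:ℂ) * Complex.I) * (z₁ + z₂)))
     - Li2 (Complex.exp (-(2 * (π:ℂ) * Complex.I) * z₂))
     + Li2 (Complex.exp (2 * (π:ℂ) * Complex.I * z₂))
     - Li2 (Complex.exp (2 * (π:ℂ) * Complex.I * (z₁ + z₂)))
     + Li2 (Complex.exp (2 * (π:ℂ) * Complex.I * z₁)))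

section Aux
open Complex Metric Set MeasureTheory Filter Topology

def good (z : ℂ) : Prop := z.im ≠ 0 ∨ z.re < 1

lemma isOpen_good : IsOpen {z : ℂ | good z} := by
  have : {z : ℂ | good z} = (Complex.im ⁻¹' {(0:ℝ)}ᶜ) ∪ (Complex.re ⁻¹' Iio 1) := by
    ext z; simp [good]
  rw [this]
  exact ((isOpen_compl_singleton).preimage Complex.continuous_im).union
    ((isOpen_Iio).preimage Complex.continuous_re)

lemma good_slit {z : ℂ} (hz : good z) {t : ℝ} (h0 : 0 ≤ t) (h1 : t ≤ 1) :
    1 - (t:ℂ) * z ∈ Complex.slitPlane := by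
  rw [Complex.mem_slitPlane_iff]
  rcases hz with h | h
  · rcases h0.eq_or_lt with rfl | ht
    · left; norm_num
    · right
      simp only [Complex.sub_im, Complex.one_im, Complex.mul_im, Complex.ofReal_re,
        Complex.ofReal_im, zero_mul, add_zero, zero_sub, neg_ne_zero]
      exact mul_ne_zero ht.ne' h
  · left
    simp only [Complex.sub_re, Complex.one_re, Complex.mul_re, Complex.ofReal_re,
      Complex.ofReal_im, zero_mul, sub_zero]
    rcases le_or_gt z.re 0 with hr | hr
    · nlinarith
    · nlinarith

lemma good_slit1 {z : ℂ} (hz : good z) : 1 - z ∈ Complex.slitPlane := by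
  simpa using good_slit hz (zero_le_one) (le_refl 1)

lemma li2_hasDerivAt {z₀ : ℂ} (hg : good z₀) (hz0 : z₀ ≠ 0) :
    HasDerivAt Li2 (-Complex.log (1 - z₀) / z₀) z₀ := by
  obtain ⟨ε, εpos, hball⟩ :=
    (Metric.nhds_basis_closedBall.mem_iff).mp (isOpen_good.mem_nhds hg)
  -- uniform lower bound on ‖1 - t x‖
  have hK : IsCompact ((Icc (0:ℝ) 1) ×ˢ closedBall z₀ ε) :=
    (isCompact_Icc).prod (isCompact_closedBall _ _)
  have hne : ((Icc (0:ℝ) 1) ×ˢ closedBall z₀ ε).Nonempty :=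
    ⟨(0, z₀), by simp [εpos.le]⟩
  have hcont : ContinuousOn (fun p : ℝ × ℂ => ‖1 - (p.1:ℂ) * p.2‖)
      ((Icc (0:ℝ) 1) ×ˢ closedBall z₀ ε) := by fun_prop
  obtain ⟨p₀, hp₀K, hp₀min⟩ := hK.exists_isMinOn hne hcont
  set δ : ℝ := ‖1 - (p₀.1:ℂ) * p₀.2‖ with hδ
  have hp₀1 : p₀.1 ∈ Icc (0:ℝ) 1 := (Set.mem_prod.mp hp₀K).1
  have hp₀2 : p₀.2 ∈ closedBall z₀ ε := (Set.mem_prod.mp hp₀K).2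
  have δpos : 0 < δ := by
    rw [hδ, norm_pos_iff]
    exact Complex.slitPlane_ne_zero (good_slit (hball hp₀2) hp₀1.1 hp₀1.2)
  have hlow : ∀ t ∈ Icc (0:ℝ) 1, ∀ x ∈ closedBall z₀ ε, δ ≤ ‖1 - (t:ℂ) * x‖ := by
    intro t ht x hx
    exact isMinOn_iff.mp hp₀min (t, x) (Set.mem_prod.mpr ⟨ht, hx⟩)
  -- integrability of F z₀
  have hF_int : IntervalIntegrable (fun t : ℝ => Complex.log (1 - (t:ℂ) * z₀) / (t:ℂ))
      volume 0 1 := by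
    set h : ℝ → ℂ := fun t => if t = 0 then -z₀ else Complex.log (1 - (t:ℂ) * z₀) / (t:ℂ) with hdef
    have hc : ∀ t ∈ Icc (0:ℝ) 1, ContinuousAt h t := by
      intro t ht
      rcases eq_or_ne t 0 with rfl | htne
      · -- continuity at 0 via the derivative of s ↦ log (1 - s z₀)
        have hd : HasDerivAt (fun s : ℝ => Complex.log (1 - (s:ℂ) * z₀)) (-z₀) 0 := by
          have hi : HasDerivAt (fun w : ℂ => 1 - w * z₀) (-z₀) 0 := by
            simpa using ((hasDerivAt_id (0:ℂ)).mul_const z₀).const_sub 1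
          have hl : HasDerivAt Complex.log ((1 - (0:ℂ) * z₀)⁻¹) (1 - (0:ℂ) * z₀) :=
            Complex.hasDerivAt_log (by rw [Complex.mem_slitPlane_iff]; norm_num)
          have := hl.comp (0:ℂ) hi
          exact (by simpa [Function.comp_def] using this : HasDerivAt (fun w : ℂ => Complex.log (1 - w * z₀)) (-z₀) 0).comp_ofReal
        have hs := hasDerivAt_iff_tendsto_slope.mp hd
        rw [ContinuousAt, ← nhdsNE_sup_pure (0:ℝ), tendsto_sup]
        constructor
        · have h0 : h 0 = -z₀ := if_pos rfl
          rw [h0]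
          refine Tendsto.congr' ?_ hs
          filter_upwards [self_mem_nhdsWithin] with s hsne
          have hs0 : s ≠ 0 := by simpa using hsne
          simp only [hdef, slope, vsub_eq_sub, if_neg hs0, sub_zero, Complex.ofReal_zero,
            zero_mul, Complex.log_one, Complex.real_smul, Complex.ofReal_inv]
          rw [div_eq_inv_mul]
        · exact tendsto_pure_nhds h 0
      · have hcont2 : ContinuousAt (fun s : ℝ => Complex.log (1 - (s:ℂ) * z₀) / (s:ℂ)) t := by
          have hslit : 1 - (t:ℂ) * z₀ ∈ Complex.slitPlane := good_slit hg ht.1 ht.2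
          have hin : ContinuousAt (fun s : ℝ => (1 - (s:ℂ) * z₀)) t := by fun_prop
          have hnum : ContinuousAt (fun s : ℝ => Complex.log (1 - (s:ℂ) * z₀)) t :=
            hin.clog hslit
          exact hnum.div (Complex.continuous_ofReal.continuousAt) (by exact_mod_cast htne)
        refine hcont2.congr ?_
        filter_upwards [isOpen_compl_singleton.mem_nhds (by simpa using htne :
          t ∈ ({(0:ℝ)}ᶜ : Set ℝ))] with s hs
        simp [hdef, if_neg (by simpa using hs : s ≠ 0)]
    have hcont3 : ContinuousOn h (uIcc (0:ℝ) 1) := by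
      rw [uIcc_of_le (by norm_num : (0:ℝ) ≤ 1)]
      exact fun t ht => (hc t ht).continuousWithinAt
    have hint : IntervalIntegrable h volume 0 1 := hcont3.intervalIntegrable
    rw [intervalIntegrable_iff] at hint ⊢
    refine hint.congr_fun ?_ measurableSet_uIoc
    intro t ht
    rw [uIoc_of_le zero_le_one] at ht
    simp [hdef, if_neg ht.1.ne']
  -- differentiate under the integral sign
  have key := intervalIntegral.hasDerivAt_integral_of_dominated_loc_of_deriv_le
    (𝕜 := ℂ) (μ := volume) (a := 0) (b := 1) (x₀ := z₀) (s := ball z₀ ε)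
    (F := fun x t => Complex.log (1 - (t:ℂ) * x) / (t:ℂ))
    (F' := fun x t => -(1 - (t:ℂ) * x)⁻¹)
    (bound := fun _ => δ⁻¹) (ball_mem_nhds z₀ εpos) ?_ hF_int ?_ ?_ ?_ ?_
  · -- conclude
    have hneg := (key.2).neg
    have hval : -∫ t in (0:ℝ)..1, -(1 - (t:ℂ) * z₀)⁻¹ = -Complex.log (1 - z₀) / z₀ := by
      rw [intervalIntegral.integral_neg, neg_neg]
      have hftc : ∫ t in (0:ℝ)..1, (1 - (t:ℂ) * z₀)⁻¹
          = (-Complex.log (1 - (1:ℝ) * z₀) / z₀) - (-Complex.log (1 - (0:ℝ) * z₀) / z₀) := by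
        refine intervalIntegral.integral_eq_sub_of_hasDerivAt (f := fun s : ℝ =>
          -Complex.log (1 - (s:ℂ) * z₀) / z₀) ?_ ?_
        · intro t ht
          rw [uIcc_of_le zero_le_one] at ht
          have hslit : 1 - (t:ℂ) * z₀ ∈ Complex.slitPlane := good_slit hg ht.1 ht.2
          have hi : HasDerivAt (fun w : ℂ => 1 - w * z₀) (-z₀) (t:ℂ) := by
            simpa using ((hasDerivAt_id ((t:ℝ):ℂ)).mul_const z₀).const_sub 1
          have hl := (Complex.hasDerivAt_log hslit).comp ((t:ℝ):ℂ) hi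
          have hc : HasDerivAt (fun w : ℂ => -Complex.log (1 - w * z₀) / z₀)
              (-((1 - (t:ℂ) * z₀)⁻¹ * -z₀) / z₀) (t:ℂ) := (hl.neg).div_const z₀
          have := hc.comp_ofReal
          refine this.congr_deriv ?_
          have hA : (1 - (t:ℂ) * z₀) ≠ 0 := Complex.slitPlane_ne_zero hslit
          field_simp
        · apply ContinuousOn.intervalIntegrable
          rw [uIcc_of_le zero_le_one]
          refine ContinuousOn.inv₀ (by fun_prop) ?_
          intro t ht
          exact Complex.slitPlane_ne_zero (good_slit hg ht.1 ht.2)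
      rw [hftc]
      push_cast
      simp [hz0]
    rw [hval] at hneg
    exact hneg
  · -- measurability of F x
    refine Filter.Eventually.of_forall fun x => ?_
    apply Measurable.aestronglyMeasurable
    exact (Complex.measurable_log.comp
      ((measurable_const.sub (Complex.measurable_ofReal.mul_const x)))).div
      Complex.measurable_ofReal
  · -- measurability of F' z₀
    apply Measurable.aestronglyMeasurable
    exact ((measurable_const.sub (Complex.measurable_ofReal.mul_const z₀)).inv).neg
  · -- bound
    refine Filter.Eventually.of_forall fun t ht x hx => ?_
    rw [uIoc_of_le zero_le_one] at ht
    have htI : t ∈ Icc (0:ℝ) 1 := Ioc_subset_Icc_self ht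
    have hlb := hlow t htI x (ball_subset_closedBall hx)
    rw [norm_neg, norm_inv]
    exact inv_anti₀ δpos hlb
  · exact intervalIntegrable_const
  · -- differentiability in x
    refine Filter.Eventually.of_forall fun t ht x hx => ?_
    rw [uIoc_of_le zero_le_one] at ht
    have htI : t ∈ Icc (0:ℝ) 1 := Ioc_subset_Icc_self ht
    have hslit : 1 - (t:ℂ) * x ∈ Complex.slitPlane :=
      good_slit (hball (ball_subset_closedBall hx)) htI.1 htI.2
    have hi : HasDerivAt (fun y : ℂ => 1 - (t:ℂ) * y) (-(t:ℂ)) x := by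
      simpa using ((hasDerivAt_id x).const_mul ((t:ℝ):ℂ)).const_sub 1
    have hl := (Complex.hasDerivAt_log hslit).comp x hi
    have := hl.div_const ((t:ℝ):ℂ)
    refine this.congr_deriv ?_
    have htne : ((t:ℝ):ℂ) ≠ 0 := by exact_mod_cast ht.1.ne'
    have hA : (1 - (t:ℂ) * x) ≠ 0 := Complex.slitPlane_ne_zero hslit
    field_simp

-- derivative of w ↦ Li2 (exp (a * f w)) where f has derivative f'
lemma term_hasDerivAt {f : ℂ → ℂ} {f' w : ℂ} (a : ℂ) (hf : HasDerivAt f f' w)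
    (h : good (Complex.exp (a * f w))) :
    HasDerivAt (fun z => Li2 (Complex.exp (a * f z)))
      (-(a * f' * Complex.log (1 - Complex.exp (a * f w)))) w := by
  have hinner : HasDerivAt (fun z => Complex.exp (a * f z))
      (Complex.exp (a * f w) * (a * f')) w := by
    have h1 : HasDerivAt (fun z => a * f z) (a * f') w := hf.const_mul a
    simpa [Function.comp_def] using (Complex.hasDerivAt_exp (a * f w)).comp w h1
  have h2 := (li2_hasDerivAt h (Complex.exp_ne_zero _)).comp w hinner
  refine h2.congr_deriv ?_
  have hE : Complex.exp (a * f w) ≠ 0 := Complex.exp_ne_zero _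
  field_simp

-- derivative of w ↦ log (1 - exp (a * f w))
lemma logterm_hasDerivAt {f : ℂ → ℂ} {f' w : ℂ} (a : ℂ) (hf : HasDerivAt f f' w)
    (h : good (Complex.exp (a * f w))) :
    HasDerivAt (fun z => Complex.log (1 - Complex.exp (a * f z)))
      (-(a * f' * Complex.exp (a * f w) / (1 - Complex.exp (a * f w)))) w := by
  have hinner : HasDerivAt (fun z => Complex.exp (a * f z))
      (Complex.exp (a * f w) * (a * f')) w := by
    have h1 : HasDerivAt (fun z => a * f z) (a * f') w := hf.const_mul a
    simpa [Function.comp_def] using (Complex.hasDerivAt_exp (a * f w)).comp w h1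
  have hsub : HasDerivAt (fun z => 1 - Complex.exp (a * f z))
      (-(Complex.exp (a * f w) * (a * f'))) w := hinner.const_sub 1
  have hlog := (Complex.hasDerivAt_log (good_slit1 h)).comp w hsub
  refine hlog.congr_deriv ?_
  field_simp

-- exp evaluations
lemma exp_pi_div_two_I : Complex.exp ((π:ℂ)/2 * Complex.I) = Complex.I := by
  rw [Complex.exp_mul_I]
  norm_num [Complex.cos_pi_div_two, Complex.sin_pi_div_two]

lemma exp_neg_pi_div_two_I : Complex.exp (-((π:ℂ)/2) * Complex.I) = -Complex.I := by
  rw [Complex.exp_mul_I, Complex.cos_neg, Complex.sin_neg]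
  norm_num [Complex.cos_pi_div_two, Complex.sin_pi_div_two]

lemma exp_neg_two_pi_I : Complex.exp (-(2 * (π:ℂ) * Complex.I)) = 1 := by
  rw [Complex.exp_neg, Complex.exp_two_pi_mul_I, inv_one]

lemma expval1 : Complex.exp (-(2 * (π:ℂ) * Complex.I) * (1/2 + 1/4)) = Complex.I := by
  have h : -(2 * (π:ℂ) * Complex.I) * (1/2 + 1/4)
      = (π:ℂ)/2 * Complex.I + -(2 * (π:ℂ) * Complex.I) := by ring
  rw [h, Complex.exp_add, exp_pi_div_two_I, exp_neg_two_pi_I, mul_one]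

lemma expval2 : Complex.exp ((2 * (π:ℂ) * Complex.I) * (1/2 + 1/4)) = -Complex.I := by
  have h : (2 * (π:ℂ) * Complex.I) * (1/2 + 1/4)
      = (π:ℂ)/2 * Complex.I + (π:ℂ) * Complex.I := by ring
  rw [h, Complex.exp_add, exp_pi_div_two_I, Complex.exp_pi_mul_I]
  ring

lemma expval3 : Complex.exp ((2 * (π:ℂ) * Complex.I) * (1/2 : ℂ)) = -1 := by
  have h : (2 * (π:ℂ) * Complex.I) * (1/2 : ℂ) = (π:ℂ) * Complex.I := by ring
  rw [h, Complex.exp_pi_mul_I]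

lemma expval4 : Complex.exp (-(2 * (π:ℂ) * Complex.I) * (1/4 : ℂ)) = -Complex.I := by
  have h : -(2 * (π:ℂ) * Complex.I) * (1/4 : ℂ) = -((π:ℂ)/2) * Complex.I := by ring
  rw [h, exp_neg_pi_div_two_I]

lemma expval5 : Complex.exp ((2 * (π:ℂ) * Complex.I) * (1/4 : ℂ)) = Complex.I := by
  have h : (2 * (π:ℂ) * Complex.I) * (1/4 : ℂ) = (π:ℂ)/2 * Complex.I := by ring
  rw [h, exp_pi_div_two_I]

lemma good_I : good Complex.I := by left; simp
lemma good_neg_I : good (-Complex.I) := by left; simp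
lemma good_neg_one : good (-1 : ℂ) := by right; norm_num

lemma two_pi_I_ne : (2*(π:ℂ)*Complex.I) ≠ 0 := by
  simp [Real.pi_ne_zero, Complex.I_ne_zero, Complex.ofReal_ne_zero]

lemma dPhi_z1 {q w : ℂ} (h1 : good (Complex.exp (-(2*(π:ℂ)*Complex.I) * (w + q))))
    (h2 : good (Complex.exp ((2*(π:ℂ)*Complex.I) * (w + q))))
    (h3 : good (Complex.exp ((2*(π:ℂ)*Complex.I) * w))) :
    HasDerivAt (fun z => Phi0 z q)
      (Complex.log (1 - Complex.exp (-(2*(π:ℂ)*Complex.I) * (w + q)))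
       + Complex.log (1 - Complex.exp ((2*(π:ℂ)*Complex.I) * (w + q)))
       - Complex.log (1 - Complex.exp ((2*(π:ℂ)*Complex.I) * w))) w := by
  have hadd : HasDerivAt (fun z : ℂ => z + q) 1 w := (hasDerivAt_id w).add_const q
  have hid : HasDerivAt (fun z : ℂ => z) 1 w := hasDerivAt_id w
  have T1 := term_hasDerivAt (-(2*(π:ℂ)*Complex.I)) hadd h1
  have T4 := term_hasDerivAt (2*(π:ℂ)*Complex.I) hadd h2
  have T5 := term_hasDerivAt (2*(π:ℂ)*Complex.I) hid h3
  have H := ((((T1.sub (hasDerivAt_const w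
      (Li2 (Complex.exp (-(2*(π:ℂ)*Complex.I) * q))))).add (hasDerivAt_const w
      (Li2 (Complex.exp ((2*(π:ℂ)*Complex.I) * q))))).sub T4).add T5).const_mul
      (1 / (2*(π:ℂ)*Complex.I))
  have hfun : (fun z => Phi0 z q) = fun z => (1 / (2*(π:ℂ)*Complex.I)) *
      (Li2 (Complex.exp (-(2*(π:ℂ)*Complex.I) * (z + q)))
       - Li2 (Complex.exp (-(2*(π:ℂ)*Complex.I) * q))
       + Li2 (Complex.exp ((2*(π:ℂ)*Complex.I) * q))
       - Li2 (Complex.exp ((2*(π:ℂ)*Complex.I) * (z + q)))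
       + Li2 (Complex.exp ((2*(π:ℂ)*Complex.I) * z))) := by
    funext z; simp only [Phi0]
  rw [hfun]
  refine H.congr_deriv ?_
  field_simp [Complex.ofReal_ne_zero.mpr Real.pi_ne_zero, Complex.I_ne_zero]
  ring

lemma dPhi_z2 {p w : ℂ} (h1 : good (Complex.exp (-(2*(π:ℂ)*Complex.I) * (p + w))))
    (h2 : good (Complex.exp ((2*(π:ℂ)*Complex.I) * (p + w))))
    (h3 : good (Complex.exp (-(2*(π:ℂ)*Complex.I) * w)))
    (h4 : good (Complex.exp ((2*(π:ℂ)*Complex.I) * w))) :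
    HasDerivAt (fun z => Phi0 p z)
      (Complex.log (1 - Complex.exp (-(2*(π:ℂ)*Complex.I) * (p + w)))
       + Complex.log (1 - Complex.exp ((2*(π:ℂ)*Complex.I) * (p + w)))
       - Complex.log (1 - Complex.exp (-(2*(π:ℂ)*Complex.I) * w))
       - Complex.log (1 - Complex.exp ((2*(π:ℂ)*Complex.I) * w))) w := by
  have hadd : HasDerivAt (fun z : ℂ => p + z) 1 w := (hasDerivAt_id w).const_add p
  have hid : HasDerivAt (fun z : ℂ => z) 1 w := hasDerivAt_id w
  have T1 := term_hasDerivAt (-(2*(π:ℂ)*Complex.I)) hadd h1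
  have T2 := term_hasDerivAt (-(2*(π:ℂ)*Complex.I)) hid h3
  have T3 := term_hasDerivAt (2*(π:ℂ)*Complex.I) hid h4
  have T4 := term_hasDerivAt (2*(π:ℂ)*Complex.I) hadd h2
  have H := ((((T1.sub T2).add T3).sub T4).add (hasDerivAt_const w
      (Li2 (Complex.exp ((2*(π:ℂ)*Complex.I) * p))))).const_mul (1 / (2*(π:ℂ)*Complex.I))
  have hfun : (fun z => Phi0 p z) = fun z => (1 / (2*(π:ℂ)*Complex.I)) *
      (Li2 (Complex.exp (-(2*(π:ℂ)*Complex.I) * (p + z)))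
       - Li2 (Complex.exp (-(2*(π:ℂ)*Complex.I) * z))
       + Li2 (Complex.exp ((2*(π:ℂ)*Complex.I) * z))
       - Li2 (Complex.exp ((2*(π:ℂ)*Complex.I) * (p + z)))
       + Li2 (Complex.exp ((2*(π:ℂ)*Complex.I) * p))) := by
    funext z; simp only [Phi0]
  rw [hfun]
  refine H.congr_deriv ?_
  field_simp [Complex.ofReal_ne_zero.mpr Real.pi_ne_zero, Complex.I_ne_zero]
  ring

lemma good_exp_e1 : good (Complex.exp (-(2*(π:ℂ)*Complex.I) * (1/2 + 1/4))) := by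
  rw [expval1]; exact good_I
lemma good_exp_e2 : good (Complex.exp ((2*(π:ℂ)*Complex.I) * (1/2 + 1/4))) := by
  rw [expval2]; exact good_neg_I
lemma good_exp_e3 : good (Complex.exp ((2*(π:ℂ)*Complex.I) * (1/2 : ℂ))) := by
  rw [expval3]; exact good_neg_one
lemma good_exp_e4 : good (Complex.exp (-(2*(π:ℂ)*Complex.I) * (1/4 : ℂ))) := by
  rw [expval4]; exact good_neg_I
lemma good_exp_e5 : good (Complex.exp ((2*(π:ℂ)*Complex.I) * (1/4 : ℂ))) := by
  rw [expval5]; exact good_I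

lemma one_sub_I_ne : (1:ℂ) - Complex.I ≠ 0 := by
  intro h; have := congrArg Complex.im h; simp at this
lemma one_add_I_ne : (1:ℂ) + Complex.I ≠ 0 := by
  intro h; have := congrArg Complex.im h; simp at this

lemma d2Phi_z1z1 :
    deriv (fun z => deriv (fun w => Phi0 w (1/4)) z) (1/2) =
      2*(π:ℂ)*Complex.I * (2*Complex.I - 1) / 2 := by
  have hU : IsOpen {z : ℂ | good (Complex.exp (-(2*(π:ℂ)*Complex.I) * (z + 1/4)))
      ∧ good (Complex.exp ((2*(π:ℂ)*Complex.I) * (z + 1/4)))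
      ∧ good (Complex.exp ((2*(π:ℂ)*Complex.I) * z))} := by
    exact ((IsOpen.preimage (by fun_prop) isOpen_good).inter
      ((IsOpen.preimage (by fun_prop) isOpen_good).inter
        (IsOpen.preimage (by fun_prop) isOpen_good)))
  have hmem : (1/2 : ℂ) ∈ {z : ℂ | good (Complex.exp (-(2*(π:ℂ)*Complex.I) * (z + 1/4)))
      ∧ good (Complex.exp ((2*(π:ℂ)*Complex.I) * (z + 1/4)))
      ∧ good (Complex.exp ((2*(π:ℂ)*Complex.I) * z))} :=
    ⟨good_exp_e1, good_exp_e2, good_exp_e3⟩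
  have heq : (fun z => deriv (fun w => Phi0 w (1/4)) z) =ᶠ[nhds (1/2 : ℂ)]
      (fun z => Complex.log (1 - Complex.exp (-(2*(π:ℂ)*Complex.I) * (z + 1/4)))
       + Complex.log (1 - Complex.exp ((2*(π:ℂ)*Complex.I) * (z + 1/4)))
       - Complex.log (1 - Complex.exp ((2*(π:ℂ)*Complex.I) * z))) := by
    filter_upwards [hU.mem_nhds hmem] with z hz
    exact (dPhi_z1 hz.1 hz.2.1 hz.2.2).deriv
  rw [heq.deriv_eq]
  have hadd : HasDerivAt (fun z : ℂ => z + 1/4) 1 (1/2 : ℂ) := (hasDerivAt_id _).add_const _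
  have hid : HasDerivAt (fun z : ℂ => z) 1 (1/2 : ℂ) := hasDerivAt_id _
  have D1 := logterm_hasDerivAt (-(2*(π:ℂ)*Complex.I)) hadd good_exp_e1
  have D2 := logterm_hasDerivAt (2*(π:ℂ)*Complex.I) hadd good_exp_e2
  have D3 := logterm_hasDerivAt (2*(π:ℂ)*Complex.I) hid good_exp_e3
  have D := (D1.add D2).sub D3
  erw [D.deriv, expval1, expval2, expval3]
  have h2ne : (1:ℂ) - (-1) ≠ 0 := by norm_num
  rw [sub_neg_eq_add, sub_neg_eq_add]
  field_simp [one_sub_I_ne, one_add_I_ne]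
  linear_combination (4*Complex.I) * Complex.I_sq

lemma d2Phi_z2z2 :
    deriv (fun z => deriv (fun w => Phi0 (1/2) w) z) (1/4) =
      2*(π:ℂ)*Complex.I * (2*Complex.I) := by
  have hU : IsOpen {z : ℂ | good (Complex.exp (-(2*(π:ℂ)*Complex.I) * (1/2 + z)))
      ∧ good (Complex.exp ((2*(π:ℂ)*Complex.I) * (1/2 + z)))
      ∧ good (Complex.exp (-(2*(π:ℂ)*Complex.I) * z))
      ∧ good (Complex.exp ((2*(π:ℂ)*Complex.I) * z))} := by
    exact ((IsOpen.preimage (by fun_prop) isOpen_good).inter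
      ((IsOpen.preimage (by fun_prop) isOpen_good).inter
        ((IsOpen.preimage (by fun_prop) isOpen_good).inter
          (IsOpen.preimage (by fun_prop) isOpen_good))))
  have hmem : (1/4 : ℂ) ∈ {z : ℂ | good (Complex.exp (-(2*(π:ℂ)*Complex.I) * (1/2 + z)))
      ∧ good (Complex.exp ((2*(π:ℂ)*Complex.I) * (1/2 + z)))
      ∧ good (Complex.exp (-(2*(π:ℂ)*Complex.I) * z))
      ∧ good (Complex.exp ((2*(π:ℂ)*Complex.I) * z))} :=
    ⟨good_exp_e1, good_exp_e2, good_exp_e4, good_exp_e5⟩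
  have heq : (fun z => deriv (fun w => Phi0 (1/2) w) z) =ᶠ[nhds (1/4 : ℂ)]
      (fun z => Complex.log (1 - Complex.exp (-(2*(π:ℂ)*Complex.I) * (1/2 + z)))
       + Complex.log (1 - Complex.exp ((2*(π:ℂ)*Complex.I) * (1/2 + z)))
       - Complex.log (1 - Complex.exp (-(2*(π:ℂ)*Complex.I) * z))
       - Complex.log (1 - Complex.exp ((2*(π:ℂ)*Complex.I) * z))) := by
    filter_upwards [hU.mem_nhds hmem] with z hz
    exact (dPhi_z2 hz.1 hz.2.1 hz.2.2.1 hz.2.2.2).deriv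
  rw [heq.deriv_eq]
  have hadd : HasDerivAt (fun z : ℂ => 1/2 + z) 1 (1/4 : ℂ) := (hasDerivAt_id _).const_add _
  have hid : HasDerivAt (fun z : ℂ => z) 1 (1/4 : ℂ) := hasDerivAt_id _
  have D1 := logterm_hasDerivAt (-(2*(π:ℂ)*Complex.I)) hadd good_exp_e1
  have D2 := logterm_hasDerivAt (2*(π:ℂ)*Complex.I) hadd good_exp_e2
  have D3 := logterm_hasDerivAt (-(2*(π:ℂ)*Complex.I)) hid good_exp_e4
  have D4 := logterm_hasDerivAt (2*(π:ℂ)*Complex.I) hid good_exp_e5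
  have D := ((D1.add D2).sub D3).sub D4
  erw [D.deriv, expval1, expval2, expval4, expval5]
  rw [sub_neg_eq_add, sub_neg_eq_add]
  field_simp [one_sub_I_ne, one_add_I_ne]
  linear_combination (2:ℂ) * Complex.I_sq

lemma d2Phi_z1z2 :
    deriv (fun z => deriv (fun w => Phi0 z w) (1/4)) (1/2) =
      2*(π:ℂ)*Complex.I * Complex.I := by
  have hU : IsOpen {z : ℂ | good (Complex.exp (-(2*(π:ℂ)*Complex.I) * (z + 1/4)))
      ∧ good (Complex.exp ((2*(π:ℂ)*Complex.I) * (z + 1/4)))} := by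
    exact ((IsOpen.preimage (by fun_prop) isOpen_good).inter
      (IsOpen.preimage (by fun_prop) isOpen_good))
  have hmem : (1/2 : ℂ) ∈ {z : ℂ | good (Complex.exp (-(2*(π:ℂ)*Complex.I) * (z + 1/4)))
      ∧ good (Complex.exp ((2*(π:ℂ)*Complex.I) * (z + 1/4)))} :=
    ⟨good_exp_e1, good_exp_e2⟩
  have heq : (fun z => deriv (fun w => Phi0 z w) (1/4)) =ᶠ[nhds (1/2 : ℂ)]
      (fun z => Complex.log (1 - Complex.exp (-(2*(π:ℂ)*Complex.I) * (z + 1/4)))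
       + Complex.log (1 - Complex.exp ((2*(π:ℂ)*Complex.I) * (z + 1/4)))
       - Complex.log (1 - Complex.exp (-(2*(π:ℂ)*Complex.I) * (1/4 : ℂ)))
       - Complex.log (1 - Complex.exp ((2*(π:ℂ)*Complex.I) * (1/4 : ℂ)))) := by
    filter_upwards [hU.mem_nhds hmem] with z hz
    exact (dPhi_z2 hz.1 hz.2 good_exp_e4 good_exp_e5).deriv
  rw [heq.deriv_eq]
  have hadd : HasDerivAt (fun z : ℂ => z + 1/4) 1 (1/2 : ℂ) := (hasDerivAt_id _).add_const _
  have D1 := logterm_hasDerivAt (-(2*(π:ℂ)*Complex.I)) hadd good_exp_e1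
  have D2 := logterm_hasDerivAt (2*(π:ℂ)*Complex.I) hadd good_exp_e2
  have D := ((D1.add D2).sub (hasDerivAt_const ((1:ℂ)/2)
      (Complex.log (1 - Complex.exp (-(2*(π:ℂ)*Complex.I) * (1/4 : ℂ)))))).sub
    (hasDerivAt_const ((1:ℂ)/2)
      (Complex.log (1 - Complex.exp ((2*(π:ℂ)*Complex.I) * (1/4 : ℂ)))))
  erw [D.deriv, expval1, expval2]
  simp only [sub_zero, sub_neg_eq_add]
  field_simp [one_sub_I_ne, one_add_I_ne]
  linear_combination Complex.I_sq

theorem stmt_4 :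
    -- ∂²Φ/∂z₁² (1/2, 1/4) = 2πi(2i-1)/2 = -2π - πi
    deriv (fun z => deriv (fun w => Phi0 w (1/4)) z) (1/2) =
      2*(π:ℂ)*Complex.I * (2*Complex.I - 1) / 2 ∧
    2*(π:ℂ)*Complex.I * (2*Complex.I - 1) / 2 = -2*(π:ℂ) - (π:ℂ)*Complex.I ∧
    -- ∂²Φ/∂z₂² (1/2, 1/4) = 2πi(2i) = -4π
    deriv (fun z => deriv (fun w => Phi0 (1/2) w) z) (1/4) =
      2*(π:ℂ)*Complex.I * (2*Complex.I) ∧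
    2*(π:ℂ)*Complex.I * (2*Complex.I) = -4*(π:ℂ) ∧
    -- ∂²Φ/∂z₁∂z₂ (1/2, 1/4) = 2πi·i = -2π
    deriv (fun z => deriv (fun w => Phi0 z w) (1/4)) (1/2) =
      2*(π:ℂ)*Complex.I * Complex.I ∧
    2*(π:ℂ)*Complex.I * Complex.I = -2*(π:ℂ) ∧
    -- the determinant of the complex Hessian equals 4π²(1+i) ≠ 0
    deriv (fun z => deriv (fun w => Phi0 w (1/4)) z) (1/2) *
        deriv (fun z => deriv (fun w => Phi0 (1/2) w) z) (1/4) -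
      (deriv (fun z => deriv (fun w => Phi0 z w) (1/4)) (1/2))^2 =
      4*(π:ℂ)^2*(1 + Complex.I) ∧
    4*(π:ℂ)^2*(1 + Complex.I) ≠ 0 := by
  refine ⟨d2Phi_z1z1, ?_, d2Phi_z2z2, ?_, d2Phi_z1z2, ?_, ?_, ?_⟩
  · linear_combination (2*(π:ℂ)) * Complex.I_sq
  · linear_combination (4*(π:ℂ)) * Complex.I_sq
  · linear_combination (2*(π:ℂ)) * Complex.I_sq
  · rw [d2Phi_z1z1, d2Phi_z2z2, d2Phi_z1z2]
    linear_combination (4*(π:ℂ)^2*(Complex.I^2 - Complex.I - 1)) * Complex.I_sq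
  · exact mul_ne_zero (mul_ne_zero (by norm_num)
      (pow_ne_zero _ (Complex.ofReal_ne_zero.mpr Real.pi_ne_zero))) one_add_I_ne
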